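/- If X is a finite set of points in ℝ^d such that the squared Euclidean distance between any two distinct points of X is an odd integer, then |X| ≤ d + 2. -/

import Mathlib

open Matrix RealInnerProductSpace

private lemma detJI (n : ℕ) (hn : Even n) :
    (Matrix.of (fun i j : Fin n => if i = j then (0 : ZMod 2) else 1)).det = 1 := by
  have : Matrix.of (fun i j : Fin n => if i = j then (0 : ZMod 2) else 1)
      = 1 + Matrix.replicateCol Unit (fun _ => (1 : ZMod 2)) * Matrix.replicateRow Unit (fun _ => (1 : ZMod 2)) := by
    ext i j
    by_cases hij : i = j <;>
      simp [hij, Matrix.one_apply, Matrix.mul_apply, CharTwo.add_self_eq_zero]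
  rw [this, Matrix.det_one_add_replicateCol_mul_replicateRow]
  simp [dotProduct]
  obtain ⟨k, rfl⟩ := hn
  push_cast
  exact CharTwo.add_self_eq_zero _

theorem odd_integral_sq_dist_card_le (d : ℕ) (X : Finset (EuclideanSpace ℝ (Fin d)))
    (h : ∀ x ∈ X, ∀ y ∈ X, x ≠ y → ∃ m : ℤ, Odd m ∧ dist x y ^ 2 = (m : ℝ)) :
    X.card ≤ d + 2 := by
  classical
  by_contra hlt
  push_neg at hlt
  -- choose an even n with d < n and n + 1 ≤ X.card
  set n : ℕ := if Even d then d + 2 else d + 1 with hn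
  have hne : Even n := by
    rcases Nat.even_or_odd d with hd | hd
    · simpa [hn, if_pos hd, Nat.even_add] using hd
    · simp only [hn, if_neg (Nat.not_even_iff_odd.mpr hd)]
      exact Odd.add_one hd
  have hnd : d < n := by
    rcases Nat.even_or_odd d with hd | hd
    · simp [hn, if_pos hd]
    · simp [hn, if_neg (Nat.not_even_iff_odd.mpr hd)]
  have hle2 : n ≤ d + 2 := by
    rcases Nat.even_or_odd d with hd | hd
    · simp [hn, if_pos hd]
    · simp [hn, if_neg (Nat.not_even_iff_odd.mpr hd)]
  have hcard : n + 1 ≤ X.card := by omega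
  obtain ⟨S, hSX, hS⟩ := Finset.exists_subset_card_eq hcard
  -- enumerate points
  let p : Fin (n + 1) → EuclideanSpace ℝ (Fin d) := fun i => (S.equivFin.symm (finCongr hS.symm i) : _)
  have hpX : ∀ i, p i ∈ X := fun i => hSX (S.equivFin.symm (finCongr hS.symm i)).2
  have hpinj : Function.Injective p := by
    intro a b hab
    have := Subtype.coe_injective hab
    simpa using congrArg (finCongr hS) (S.equivFin.symm.injective this)
  -- the chosen odd integers
  let m : Fin (n + 1) → Fin (n + 1) → ℤ := fun i j =>
    if hij : p i ≠ p j then (h _ (hpX i) _ (hpX j) hij).choose else 0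
  have hm_odd : ∀ i j, i ≠ j → Odd (m i j) := by
    intro i j hij
    have hij' : p i ≠ p j := fun e => hij (hpinj e)
    simp only [m, dif_pos hij']
    exact (h _ (hpX i) _ (hpX j) hij').choose_spec.1
  have hm_eq : ∀ i j, i ≠ j → dist (p i) (p j) ^ 2 = ((m i j : ℤ) : ℝ) := by
    intro i j hij
    have hij' : p i ≠ p j := fun e => hij (hpinj e)
    simp only [m, dif_pos hij']
    exact (h _ (hpX i) _ (hpX j) hij').choose_spec.2
  -- the difference vectors and coordinate matrix
  let v : Fin n → EuclideanSpace ℝ (Fin d) := fun i => p i.succ - p 0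
  let A : Matrix (Fin d) (Fin n) ℝ := Matrix.of fun k i => v i k
  let B : Matrix (Fin n) (Fin n) ℝ := Aᵀ * A
  have hB : ∀ i j, B i j = (inner ℝ (v i) (v j) : ℝ) := by
    intro i j
    simp only [B, A, Matrix.mul_apply, Matrix.transpose_apply, Matrix.of_apply,
      PiLp.inner_apply, RCLike.inner_apply, conj_trivial]
    try exact Finset.sum_congr rfl fun k _ => mul_comm _ _
  -- B has zero determinant since n > d
  have hdetB : B.det = 0 := by
    have : ¬ Function.Injective A.mulVecLin := by
      intro hinj
      have := LinearMap.finrank_le_finrank_of_injective hinj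
      simp [Module.finrank_fintype_fun_eq_card] at this
      omega
    obtain ⟨x, y, hxy, hne'⟩ := Function.not_injective_iff.mp this
    have h0 : A.mulVecLin (x - y) = 0 := by rw [map_sub, hxy, sub_self]
    have hwz : A.mulVec (x - y) = 0 := by rw [← Matrix.mulVecLin_apply, h0]
    set w := x - y with hw
    have hw0 : w ≠ 0 := sub_ne_zero.mpr hne'
    refine Matrix.exists_mulVec_eq_zero_iff.mp ⟨w, hw0, ?_⟩
    show (Aᵀ * A).mulVec w = 0
    rw [← Matrix.mulVec_mulVec, hwz, Matrix.mulVec_zero]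
  -- the integer matrix
  let M : Matrix (Fin n) (Fin n) ℤ := Matrix.of fun i j =>
    if i = j then 2 * m 0 i.succ else m 0 i.succ + m 0 j.succ - m i.succ j.succ
  -- M over ℝ equals 2 • B
  have hMR : M.map (Int.castRingHom ℝ) = (2 : ℝ) • B := by
    ext i j
    have hnorm : ∀ i : Fin n, ((m 0 i.succ : ℤ) : ℝ) = ‖v i‖ ^ 2 := by
      intro i
      rw [← hm_eq 0 i.succ (Fin.succ_ne_zero i).symm, dist_eq_norm, ← norm_neg]
      congr 1
      simp only [v]
      abel
    by_cases hij : i = j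
    · subst hij
      have := hnorm i
      simp only [M, Matrix.map_apply, Matrix.of_apply, if_pos rfl, Matrix.smul_apply,
        hB, real_inner_self_eq_norm_sq, smul_eq_mul, Int.coe_castRingHom]
      push_cast
      rw [this]
      try ring
    · have hsucc : i.succ ≠ j.succ := fun e => hij (Fin.succ_injective _ e)
      have hd2 : ((m i.succ j.succ : ℤ) : ℝ) = ‖v i - v j‖ ^ 2 := by
        rw [← hm_eq i.succ j.succ hsucc, dist_eq_norm]
        congr 1
        simp [v]
        try abel
      have key := norm_sub_sq_real (v i) (v j)
      simp only [M, Matrix.map_apply, Matrix.of_apply, if_neg hij, Matrix.smul_apply,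
        hB, smul_eq_mul, Int.coe_castRingHom]
      push_cast
      rw [hnorm i, hnorm j, hd2]
      linarith
  -- M mod 2 is J - I
  have hM2 : M.map (Int.castRingHom (ZMod 2)) =
      Matrix.of (fun i j : Fin n => if i = j then (0 : ZMod 2) else 1) := by
    ext i j
    by_cases hij : i = j
    · subst hij
      simp only [M, Matrix.map_apply, Matrix.of_apply, if_true, eq_self_iff_true]
      rw [_root_.map_mul, show ((Int.castRingHom (ZMod 2)) 2) = 0 by decide, zero_mul]
    · have hsucc : i.succ ≠ j.succ := fun e => hij (Fin.succ_injective _ e)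
      obtain ⟨a, ha⟩ := hm_odd 0 i.succ (Fin.succ_ne_zero i).symm
      obtain ⟨b, hb⟩ := hm_odd 0 j.succ (Fin.succ_ne_zero j).symm
      obtain ⟨c, hc⟩ := hm_odd i.succ j.succ hsucc
      simp only [M, Matrix.map_apply, Matrix.of_apply, if_neg hij, ha, hb, hc]
      have he : (2*a+1+(2*b+1)-(2*c+1) : ℤ) = 2*(a+b-c)+1 := by ring
      rw [he, _root_.map_add, _root_.map_mul, _root_.map_one,
        show ((Int.castRingHom (ZMod 2)) 2) = 0 by decide, zero_mul, zero_add]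
  -- determinant of M is odd, hence nonzero
  have hdetM : M.det ≠ 0 := by
    intro h0
    have : (Int.castRingHom (ZMod 2)) M.det = 1 := by
      rw [RingHom.map_det, RingHom.mapMatrix_apply, hM2, detJI n hne]
    rw [h0] at this
    simp at this
  -- contradiction
  apply hdetM
  have h2 : ((Int.castRingHom ℝ) M.det : ℝ) = 0 := by
    rw [RingHom.map_det, RingHom.mapMatrix_apply, hMR, Matrix.det_smul, hdetB, mul_zero]
  have h3 : ((M.det : ℤ) : ℝ) = 0 := h2
  exact_mod_cast h3
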